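/- Let λ > 0, γ > 0 with λγ ≤ 1, C ≥ 0, let (ε_k)_{k≥0} be a nonincreasing sequence of nonnegative real numbers, and let (W_k)_{k≥0} be a sequence of nonnegative real numbers satisfying W_{k+1} ≤ (1 − λγ)·W_k + γ²C + 2γε_k for all k ≥ 0. Then for every K ≥ 1: W_K ≤ (1 − λγ)^K · W_0 + (γ/λ)·C + (2/(Kλ))·∑_{k=0}^{K−1} ε_k. -/

import Mathlib

/-- Real-sequence form of the fixed-step-size convergence theorem for inexact PGLA
in the strongly convex case with monotonically decreasing proximal errors. -/
theorem iPGLA_fixed_step_strongly_convex_decreasing_errors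
    (lam γ C : ℝ) (hlam : 0 < lam) (hγ : 0 < γ) (hlamγ : lam * γ ≤ 1)
    (hC : 0 ≤ C)
    (ε : ℕ → ℝ) (hεnn : ∀ k, 0 ≤ ε k) (hεanti : Antitone ε)
    (W : ℕ → ℝ) (hW : ∀ k, 0 ≤ W k)
    (hrec : ∀ k, W (k + 1) ≤ (1 - lam * γ) * W k + γ ^ 2 * C + 2 * γ * ε k) :
    ∀ K : ℕ, 1 ≤ K →
      W K ≤ (1 - lam * γ) ^ K * W 0 + γ / lam * C
              + 2 / (K * lam) * ∑ k ∈ Finset.range K, ε k := by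
  set r : ℝ := 1 - lam * γ with hr
  have hq : 0 < lam * γ := mul_pos hlam hγ
  have hr0 : 0 ≤ r := by simp [hr]; linarith
  have hr1 : r ≤ 1 := by simp [hr]; linarith
  -- unrolled recursion
  have key : ∀ K, W K ≤ r ^ K * W 0 + (∑ k ∈ Finset.range K, r ^ k) * (γ ^ 2 * C)
      + 2 * γ * ∑ k ∈ Finset.range K, r ^ (K - 1 - k) * ε k := by
    intro K
    induction K with
    | zero => simp
    | succ K ih =>
      have h1 : W (K + 1) ≤ r * W K + γ ^ 2 * C + 2 * γ * ε K := hrec K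
      have h2 : r * W K ≤ r * (r ^ K * W 0 + (∑ k ∈ Finset.range K, r ^ k) * (γ ^ 2 * C)
          + 2 * γ * ∑ k ∈ Finset.range K, r ^ (K - 1 - k) * ε k) :=
        mul_le_mul_of_nonneg_left ih hr0
      have e1 : r * ∑ k ∈ Finset.range K, r ^ (K - 1 - k) * ε k
          = ∑ k ∈ Finset.range K, r ^ (K - k) * ε k := by
        rw [Finset.mul_sum]
        refine Finset.sum_congr rfl fun k hk => ?_
        have hkK : k < K := Finset.mem_range.mp hk
        have : K - k = (K - 1 - k) + 1 := by omega
        rw [this, pow_succ]; ring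
      have e2 : ∑ k ∈ Finset.range (K + 1), r ^ (K + 1 - 1 - k) * ε k
          = (∑ k ∈ Finset.range K, r ^ (K - k) * ε k) + ε K := by
        rw [Finset.sum_range_succ]
        simp
      have e3 : (∑ k ∈ Finset.range (K + 1), r ^ k) = r * ∑ k ∈ Finset.range K, r ^ k + 1 :=
        geom_sum_succ
      calc W (K + 1) ≤ r * W K + γ ^ 2 * C + 2 * γ * ε K := h1
        _ ≤ r * (r ^ K * W 0 + (∑ k ∈ Finset.range K, r ^ k) * (γ ^ 2 * C)
              + 2 * γ * ∑ k ∈ Finset.range K, r ^ (K - 1 - k) * ε k)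
              + γ ^ 2 * C + 2 * γ * ε K := by linarith
        _ = r ^ (K + 1) * W 0 + (∑ k ∈ Finset.range (K + 1), r ^ k) * (γ ^ 2 * C)
              + 2 * γ * ∑ k ∈ Finset.range (K + 1), r ^ (K + 1 - 1 - k) * ε k := by
          rw [e2, e3]
          linear_combination 2 * γ * e1 + W 0 * (pow_succ r K)
  intro K hK
  have hKpos : (0 : ℝ) < K := by exact_mod_cast hK
  have hlne : lam ≠ 0 := hlam.ne'
  have hγne : γ ≠ 0 := hγ.ne'
  have hKne : (K : ℝ) ≠ 0 := hKpos.ne'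
  -- geometric sum bound
  have hgeom : (∑ k ∈ Finset.range K, r ^ k) ≤ 1 / (lam * γ) := by
    have h3 : (∑ k ∈ Finset.range K, r ^ k) * (lam * γ) = 1 - r ^ K := by
      have h2 := geom_sum_mul r K
      have hlr : lam * γ = 1 - r := by rw [hr]; ring
      rw [hlr]
      linear_combination -h2
    rw [le_div_iff₀ hq, h3]
    linarith [pow_nonneg hr0 K]
  -- reflect the error sum
  have hrefl : ∑ k ∈ Finset.range K, r ^ (K - 1 - k) * ε k
      = ∑ j ∈ Finset.range K, r ^ j * ε (K - 1 - j) := by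
    rw [← Finset.sum_range_reflect (fun j => r ^ j * ε (K - 1 - j)) K]
    refine Finset.sum_congr rfl fun k hk => ?_
    have hkK : k < K := Finset.mem_range.mp hk
    have : K - 1 - (K - 1 - k) = k := by omega
    rw [this]
  -- Chebyshev
  have hanti : AntivaryOn (fun j : ℕ => r ^ j) (fun j : ℕ => ε (K - 1 - j))
      (Finset.range K) := by
    intro i hi j hj hij
    simp only at hij ⊢
    have hij' : K - 1 - j < K - 1 - i := by
      by_contra h
      push_neg at h
      exact absurd (hεanti h) (not_le.mpr hij)
    have : i ≤ j := by omega
    exact pow_le_pow_of_le_one hr0 hr1 this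
  have hcheb := hanti.card_mul_sum_le_sum_mul_sum
  simp only [Finset.card_range] at hcheb
  have hεrefl : ∑ j ∈ Finset.range K, ε (K - 1 - j) = ∑ k ∈ Finset.range K, ε k :=
    Finset.sum_range_reflect (fun k => ε k) K
  have hεsum_nn : 0 ≤ ∑ k ∈ Finset.range K, ε k :=
    Finset.sum_nonneg fun k _ => hεnn k
  -- combine : K * S ≤ (1/(lam γ)) * Σ ε
  have hS : (K : ℝ) * ∑ j ∈ Finset.range K, r ^ j * ε (K - 1 - j)
      ≤ 1 / (lam * γ) * ∑ k ∈ Finset.range K, ε k := by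
    calc (K : ℝ) * ∑ j ∈ Finset.range K, r ^ j * ε (K - 1 - j)
        ≤ (∑ j ∈ Finset.range K, r ^ j) * ∑ j ∈ Finset.range K, ε (K - 1 - j) := hcheb
      _ = (∑ j ∈ Finset.range K, r ^ j) * ∑ k ∈ Finset.range K, ε k := by rw [hεrefl]
      _ ≤ 1 / (lam * γ) * ∑ k ∈ Finset.range K, ε k :=
          mul_le_mul_of_nonneg_right hgeom hεsum_nn
  have hfinal := key K
  rw [hrefl] at hfinal
  -- bound each term
  have hb1 : (∑ k ∈ Finset.range K, r ^ k) * (γ ^ 2 * C) ≤ γ / lam * C := by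
    have h2 : 0 ≤ γ ^ 2 * C := by positivity
    have := mul_le_mul_of_nonneg_right hgeom h2
    calc (∑ k ∈ Finset.range K, r ^ k) * (γ ^ 2 * C) ≤ 1 / (lam * γ) * (γ ^ 2 * C) := this
      _ = γ / lam * C := by field_simp
  have hb2 : 2 * γ * ∑ j ∈ Finset.range K, r ^ j * ε (K - 1 - j)
      ≤ 2 / (K * lam) * ∑ k ∈ Finset.range K, ε k := by
    have hS' : ∑ j ∈ Finset.range K, r ^ j * ε (K - 1 - j)
        ≤ 1 / ((K : ℝ) * (lam * γ)) * ∑ k ∈ Finset.range K, ε k := by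
      rw [← le_div_iff₀' hKpos] at hS
      calc _ ≤ 1 / (lam * γ) * (∑ k ∈ Finset.range K, ε k) / K := hS
        _ = 1 / ((K : ℝ) * (lam * γ)) * ∑ k ∈ Finset.range K, ε k := by
            ring
    have := mul_le_mul_of_nonneg_left hS' (by positivity : (0:ℝ) ≤ 2 * γ)
    calc 2 * γ * ∑ j ∈ Finset.range K, r ^ j * ε (K - 1 - j)
        ≤ 2 * γ * (1 / ((K : ℝ) * (lam * γ)) * ∑ k ∈ Finset.range K, ε k) := this
      _ = 2 / (K * lam) * ∑ k ∈ Finset.range K, ε k := by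
          field_simp
  linarith
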